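/- Let a₁,…,a_n be coprime positive integers with sum m, k = ⌈log₂ m⌉, and for K ≥ k let c = ⌊2^K/m⌋, a₀ = 2^k − m, A_i = c·a_i for 1 ≤ i ≤ n, and A₀ = 2^K − c·m. Then (2^K/(cm))·(ν(A₀/2^K) + Σ_{i=1}^n ν(A_i/2^K)) ≤ (2^k/m)·(ν(a₀/2^k) + Σ_{i=1}^n ν(a_i/2^k)); that is, the expected entropy cost of the amplified rejection sampler is at most that of the unamplified one. -/

import Mathlib

noncomputable def epsBit (d : ℕ) (x : ℝ) : ℝ := ((⌊2 ^ d * x⌋ % 2 : ℤ) : ℝ)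

noncomputable def nu (x : ℝ) : ℝ := ∑' d : ℕ, (d : ℝ) * epsBit d x / 2 ^ d

/-- Discrete cost numerator: `T L j = ∑_{s=1}^L j mod 2^s`. -/
def Tc (L j : ℕ) : ℕ := ∑ s ∈ Finset.range L, j % 2 ^ (s + 1)

lemma Tc_subadd (L x y : ℕ) : Tc L (x + y) ≤ Tc L x + Tc L y := by
  rw [Tc, Tc, Tc, ← Finset.sum_add_distrib]
  refine Finset.sum_le_sum fun s _ => ?_
  conv_lhs => rw [Nat.add_mod]
  exact Nat.mod_le _ _

lemma Tc_double (L x : ℕ) : Tc (L + 1) (2 * x) = 2 * Tc L x := by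
  rw [Tc, Tc, Finset.sum_range_succ', Finset.mul_sum]
  have h0 : 2 * x % 2 ^ (0 + 1) = 0 := by
    simp [Nat.pow_succ, Nat.mul_mod_right, Nat.mul_comm]
  rw [h0, add_zero]
  refine Finset.sum_congr rfl fun s _ => ?_
  have : (2:ℕ) ^ (s + 1 + 1) = 2 * 2 ^ (s + 1) := by ring
  rw [this, Nat.mul_mod_mul_left]

lemma Tc_ext {x L : ℕ} (L' : ℕ) (h1 : x ≤ 2 ^ L) (h2 : L ≤ L') :
    Tc L' x = Tc L x + (L' - L) * x := by
  obtain ⟨d, rfl⟩ := Nat.exists_eq_add_of_le h2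
  rw [Tc, Finset.sum_range_add, ← Tc]
  congr 1
  · rw [Nat.add_sub_cancel_left]
    rw [Finset.sum_congr rfl fun s _ => Nat.mod_eq_of_lt
      (lt_of_le_of_lt h1 (Nat.pow_lt_pow_right one_lt_two (by omega)))]
    simp [Finset.sum_const, Nat.mul_comm]

lemma digit_sum (j : ℕ) : ∀ L, ∑ s ∈ Finset.range L, (j / 2 ^ s % 2) * 2 ^ s = j % 2 ^ L := by
  intro L
  induction L with
  | zero => simp [Nat.mod_one]
  | succ L ih =>
      rw [Finset.sum_range_succ, ih, pow_succ, Nat.mod_mul]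
      ring

lemma U_eq_Tc (j : ℕ) : ∀ L, ∑ s ∈ Finset.range (L + 1), (L - s) * (j / 2 ^ s % 2) * 2 ^ s = Tc L j := by
  intro L
  induction L with
  | zero => simp [Tc]
  | succ L ih =>
      rw [Finset.sum_range_succ, Nat.sub_self, zero_mul, zero_mul, add_zero]
      have : ∀ s ∈ Finset.range (L + 1),
          (L + 1 - s) * (j / 2 ^ s % 2) * 2 ^ s
            = (L - s) * (j / 2 ^ s % 2) * 2 ^ s + (j / 2 ^ s % 2) * 2 ^ s := by
        intro s hs
        rw [Finset.mem_range] at hs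
        have : L + 1 - s = (L - s) + 1 := by omega
        rw [this]; ring
      rw [Finset.sum_congr rfl this, Finset.sum_add_distrib, ih, digit_sum j (L + 1),
        Tc, Tc, Finset.sum_range_succ]

lemma nu_eq (j L : ℕ) (h : j ≤ 2 ^ L) :
    nu ((j : ℝ) / 2 ^ L) = (Tc L j : ℝ) / 2 ^ L := by
  have hfl : ∀ d : ℕ, d ≤ L → (⌊(2:ℝ) ^ d * ((j : ℝ) / 2 ^ L)⌋ % 2 : ℤ) = ((j / 2 ^ (L - d) % 2 : ℕ) : ℤ) := by
    intro d hd
    have hpow : (2:ℝ) ^ L = 2 ^ d * 2 ^ (L - d) := by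
      rw [← pow_add]; congr 1; omega
    have : (2:ℝ) ^ d * ((j : ℝ) / 2 ^ L) = (j : ℝ) / ((2 ^ (L - d) : ℕ) : ℝ) := by
      rw [hpow]; push_cast; field_simp
    rw [this]
    have : ((j : ℝ) / ((2 ^ (L - d) : ℕ) : ℝ)) = (((j : ℚ) / ((2 ^ (L - d) : ℕ) : ℚ) : ℚ) : ℝ) := by
      push_cast; ring
    rw [this, Rat.floor_cast, Rat.floor_natCast_div_natCast]
    norm_cast
  have hzero : ∀ d : ℕ, d ∉ Finset.range (L + 1) → (d : ℝ) * epsBit d ((j : ℝ) / 2 ^ L) / 2 ^ d = 0 := by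
    intro d hd
    rw [Finset.mem_range, not_lt] at hd
    have : (2:ℝ) ^ d * ((j : ℝ) / 2 ^ L) = ((j * 2 ^ (d - L) : ℕ) : ℝ) := by
      have hpow : (2:ℝ) ^ d = 2 ^ L * 2 ^ (d - L) := by
        rw [← pow_add]; congr 1; omega
      push_cast [hpow]; field_simp
    have heps : epsBit d ((j : ℝ) / 2 ^ L) = 0 := by
      rw [epsBit, this, Int.floor_natCast]
      have : ((j * 2 ^ (d - L) : ℕ) : ℤ) % 2 = 0 := by
        have : (2:ℤ) ∣ ((j * 2 ^ (d - L) : ℕ) : ℤ) := by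
          push_cast
          exact Dvd.dvd.mul_left (dvd_pow_self 2 (by omega)) _
        omega
      rw [this]; norm_num
    rw [heps]; ring
  rw [nu, tsum_eq_sum hzero]
  have hterm : ∀ d ∈ Finset.range (L + 1),
      (d : ℝ) * epsBit d ((j : ℝ) / 2 ^ L) / 2 ^ d
        = ((d * (j / 2 ^ (L - d) % 2) * 2 ^ (L - d) : ℕ) : ℝ) / 2 ^ L := by
    intro d hd
    rw [Finset.mem_range] at hd
    have hd' : d ≤ L := by omega
    rw [epsBit, hfl d hd', Int.cast_natCast]
    have hpow : (2:ℝ) ^ L = 2 ^ (L - d) * 2 ^ d := by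
      rw [← pow_add]; congr 1; omega
    push_cast [hpow]
    rw [div_eq_div_iff (by positivity) (by positivity)]
    ring
  rw [Finset.sum_congr rfl hterm, ← Finset.sum_div, ← Nat.cast_sum]
  congr 2
  calc ∑ d ∈ Finset.range (L + 1), d * (j / 2 ^ (L - d) % 2) * 2 ^ (L - d)
      = ∑ s ∈ Finset.range (L + 1), (L - s) * (j / 2 ^ (L - (L - s)) % 2) * 2 ^ (L - (L - s)) := by
        rw [← Finset.sum_range_reflect (fun d => d * (j / 2 ^ (L - d) % 2) * 2 ^ (L - d)) (L+1)]
        refine Finset.sum_congr rfl fun s hs => ?_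
        congr 2 <;> · congr 1; omega
    _ = ∑ s ∈ Finset.range (L + 1), (L - s) * (j / 2 ^ s % 2) * 2 ^ s := by
        refine Finset.sum_congr rfl fun s hs => ?_
        rw [Finset.mem_range] at hs
        have : L - (L - s) = s := by omega
        rw [this]
    _ = Tc L j := U_eq_Tc j L

lemma odd_zero_step {m k K b : ℕ} (hm1 : 1 ≤ m) (hmk : m ≤ 2 ^ k) (hkK : k ≤ K)
    (hbm : b < m) (hodd : m ≤ 2 * b) :
    Tc (K + 1) (2 * b - m) + (K + 1 - k) * m ≤ 2 * Tc K b + Tc k (2 ^ k - m) := by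
  set u := 2 * b - m with hu
  have hum : u + m = 2 * b := by omega
  have hukey : u + 2 ^ k = 2 * b + (2 ^ k - m) := by omega
  have hu2k : u ≤ 2 ^ k := by omega
  -- T (K+1) (u + 2^k) = T k u + (u + 2^k) + (K - k) * (u + 2^k)
  have e1 : Tc (K + 1) (u + 2 ^ k) = Tc k u + (u + 2 ^ k) + (K - k) * (u + 2 ^ k) := by
    have h1 : Tc (K + 1) (u + 2 ^ k) = Tc (k + 1) (u + 2 ^ k) + (K - k) * (u + 2 ^ k) := by
      have := Tc_ext (x := u + 2 ^ k) (L := k + 1) (K + 1)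
        (by rw [pow_succ]; omega) (by omega)
      rw [this]; congr 2; omega
    have h2 : Tc (k + 1) (u + 2 ^ k) = Tc k u + (u + 2 ^ k) := by
      rw [Tc, Tc, Finset.sum_range_succ]
      congr 1
      · refine Finset.sum_congr rfl fun s hs => ?_
        rw [Finset.mem_range] at hs
        have hdvd : (2:ℕ) ^ (s + 1) ∣ 2 ^ k := pow_dvd_pow 2 (by omega)
        have h0 : 2 ^ k % 2 ^ (s + 1) = 0 := Nat.mod_eq_zero_of_dvd hdvd
        rw [Nat.add_mod, h0, add_zero, Nat.mod_mod_of_dvd u (dvd_refl _)]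
      · exact Nat.mod_eq_of_lt (by rw [pow_succ]; omega)
    rw [h1, h2]
  -- subadditivity
  have e2 : Tc (K + 1) (u + 2 ^ k) ≤ Tc (K + 1) (2 * b) + Tc (K + 1) (2 ^ k - m) := by
    rw [hukey]; exact Tc_subadd _ _ _
  have e3 : Tc (K + 1) (2 * b) = 2 * Tc K b := Tc_double K b
  have e4 : Tc (K + 1) (2 ^ k - m) = Tc k (2 ^ k - m) + (K + 1 - k) * (2 ^ k - m) :=
    Tc_ext (K + 1) (by omega) (by omega)
  have e5 : Tc (K + 1) u = Tc k u + (K + 1 - k) * u := Tc_ext (K + 1) hu2k (by omega)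
  -- arithmetic
  have hK1 : K + 1 - k = (K - k) + 1 := by omega
  rw [e5]
  rw [e1, e3, e4] at e2
  -- now pure arithmetic over ℕ
  nlinarith [Nat.sub_add_cancel hmk, Nat.sub_add_cancel hodd, e2]

lemma main_ineq {n : ℕ} (a : Fin n → ℕ) (m k : ℕ) (hm : m = ∑ i, a i) (hm1 : 1 ≤ m)
    (hmk : m ≤ 2 ^ k) (hkm : 2 ^ k < 2 * m) :
    ∀ K, k ≤ K → Tc K (2 ^ K % m) + ∑ i, Tc K (2 ^ K / m * a i)
      ≤ 2 ^ K / m * (Tc k (2 ^ k - m) + ∑ i, Tc k (a i)) := by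
  intro K hK
  induction K, hK using Nat.le_induction with
  | base =>
      have hdiv : 2 ^ k / m = 1 := Nat.div_eq_of_lt_le (by omega) (by omega)
      have hmod : 2 ^ k % m = 2 ^ k - m := by
        have := Nat.div_add_mod (2 ^ k) m
        rw [hdiv] at this; omega
      rw [hdiv, hmod, one_mul]
      simp
  | succ K hK ih =>
      set c := 2 ^ K / m with hc
      set b := 2 ^ K % m with hb
      have hbm : b < m := Nat.mod_lt _ (by omega)
      have hmc : m * (2 * c) = 2 * (m * c) := by ring
      have hdm : m * c + b = 2 ^ K := Nat.div_add_mod (2 ^ K) m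
      have h2K : 2 ^ (K + 1) = m * (2 * c) + 2 * b := by
        rw [pow_succ]; omega
      by_cases hcase : 2 * b < m
      · -- even case
        have hdiv : 2 ^ (K + 1) / m = 2 * c := by
          rw [h2K, Nat.mul_add_div (by omega), Nat.div_eq_of_lt hcase, add_zero]
        have hmod : 2 ^ (K + 1) % m = 2 * b := by
          rw [h2K, Nat.mul_add_mod, Nat.mod_eq_of_lt hcase]
        rw [hdiv, hmod, Tc_double]
        have hterm : ∀ i : Fin n, Tc (K + 1) (2 * c * a i) = 2 * Tc K (c * a i) := by
          intro i; rw [mul_assoc, Tc_double]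
        rw [Finset.sum_congr rfl fun i _ => hterm i, ← Finset.mul_sum, ← Nat.mul_add,
          mul_assoc]
        exact Nat.mul_le_mul_left 2 ih
      · -- odd case
        push_neg at hcase
        have hmc' : m * (2 * c + 1) = 2 * (m * c) + m := by ring
        have h2K' : 2 ^ (K + 1) = m * (2 * c + 1) + (2 * b - m) := by omega
        have hdiv : 2 ^ (K + 1) / m = 2 * c + 1 := by
          rw [h2K', Nat.mul_add_div (by omega), Nat.div_eq_of_lt (by omega), add_zero]
        have hmod : 2 ^ (K + 1) % m = 2 * b - m := by
          rw [h2K', Nat.mul_add_mod, Nat.mod_eq_of_lt (by omega)]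
        rw [hdiv, hmod]
        have hzero := odd_zero_step hm1 hmk (le_trans hK (Nat.le_succ_of_le le_rfl) |> fun _ => hK) hbm hcase
        -- per-outcome bounds
        have hai : ∀ i : Fin n, a i ≤ 2 ^ k := fun i =>
          le_trans (hm ▸ Finset.single_le_sum (fun j _ => Nat.zero_le (a j)) (Finset.mem_univ i)) hmk
        have hterm : ∀ i : Fin n, Tc (K + 1) ((2 * c + 1) * a i)
            ≤ 2 * Tc K (c * a i) + Tc k (a i) + (K + 1 - k) * a i := by
          intro i
          have hsplit : (2 * c + 1) * a i = 2 * (c * a i) + a i := by ring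
          calc Tc (K + 1) ((2 * c + 1) * a i)
              ≤ Tc (K + 1) (2 * (c * a i)) + Tc (K + 1) (a i) := by
                rw [hsplit]; exact Tc_subadd _ _ _
            _ = 2 * Tc K (c * a i) + (Tc k (a i) + (K + 1 - k) * a i) := by
                rw [Tc_double, Tc_ext (K + 1) (hai i) (by omega)]
            _ = 2 * Tc K (c * a i) + Tc k (a i) + (K + 1 - k) * a i := by ring
        have hsum : ∑ i, Tc (K + 1) ((2 * c + 1) * a i)
            ≤ 2 * ∑ i, Tc K (c * a i) + ∑ i, Tc k (a i) + (K + 1 - k) * m := by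
          calc ∑ i, Tc (K + 1) ((2 * c + 1) * a i)
              ≤ ∑ i, (2 * Tc K (c * a i) + Tc k (a i) + (K + 1 - k) * a i) :=
                Finset.sum_le_sum fun i _ => hterm i
            _ = 2 * ∑ i, Tc K (c * a i) + ∑ i, Tc k (a i) + (K + 1 - k) * m := by
                rw [hm]; rw [Finset.sum_add_distrib, Finset.sum_add_distrib,
                  ← Finset.mul_sum, ← Finset.mul_sum]
        set S := Tc k (2 ^ k - m) + ∑ i, Tc k (a i) with hS
        have key : (2 * c + 1) * S = 2 * (c * S) + S := by ring
        have step : Tc (K + 1) (2 * b - m) + (∑ i, Tc (K + 1) ((2 * c + 1) * a i))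
            + (K + 1 - k) * m ≤ (2 * c + 1) * S + (K + 1 - k) * m := by
          calc Tc (K + 1) (2 * b - m) + (∑ i, Tc (K + 1) ((2 * c + 1) * a i)) + (K + 1 - k) * m
              ≤ (2 * Tc K b + Tc k (2 ^ k - m))
                + (2 * ∑ i, Tc K (c * a i) + ∑ i, Tc k (a i) + (K + 1 - k) * m) := by
                have := Nat.add_le_add hzero hsum; omega
            _ = 2 * (Tc K b + ∑ i, Tc K (c * a i)) + S + (K + 1 - k) * m := by
                rw [hS]; ring
            _ ≤ 2 * (c * S) + S + (K + 1 - k) * m := by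
                have := Nat.mul_le_mul_left 2 ih; omega
            _ = (2 * c + 1) * S + (K + 1 - k) * m := by rw [key]
        omega

theorem aldr_cost_le_fldr_cost (n : ℕ) (a : Fin n → ℕ)
    (hpos : ∀ i, 0 < a i) (hcop : Finset.univ.gcd a = 1)
    (m : ℕ) (hm : m = ∑ i, a i)
    (k : ℕ) (hk : k = Nat.clog 2 m)
    (K : ℕ) (hK : k ≤ K)
    (c : ℕ) (hc : c = 2 ^ K / m) :
    ((2 : ℝ) ^ K / ((c : ℝ) * m)) *
        (nu (((2 ^ K - c * m : ℕ) : ℝ) / 2 ^ K) +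
          ∑ i, nu (((c * a i : ℕ) : ℝ) / 2 ^ K))
      ≤ ((2 : ℝ) ^ k / m) *
        (nu (((2 ^ k - m : ℕ) : ℝ) / 2 ^ k) +
          ∑ i, nu ((a i : ℝ) / 2 ^ k)) := by
  -- n ≠ 0 and m ≥ 1
  have hn : n ≠ 0 := by
    rintro rfl
    simp [Finset.univ_eq_empty] at hcop
  have hm1 : 1 ≤ m := by
    obtain ⟨i⟩ := Fin.pos_iff_nonempty.mp (Nat.pos_of_ne_zero hn)
    calc 1 ≤ a i := hpos i
      _ ≤ ∑ j, a j := Finset.single_le_sum (fun j _ => Nat.zero_le (a j)) (Finset.mem_univ i)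
      _ = m := hm.symm
  have hmk : m ≤ 2 ^ k := hk ▸ Nat.le_pow_clog (by norm_num) m
  have hkm : 2 ^ k < 2 * m := by
    rcases Nat.lt_or_ge m 2 with h1 | h2
    · have hmeq : m = 1 := by omega
      subst hmeq
      have : k = 0 := by rw [hk]; simp
      rw [this]; norm_num
    · by_contra hcon
      push_neg at hcon
      have hk1 : 1 ≤ k := by
        by_contra hk0
        have hk00 : k = 0 := by omega
        rw [hk00] at hmk; omega
      have hle : m ≤ 2 ^ (k - 1) := by
        have : (2:ℕ) ^ k = 2 * 2 ^ (k - 1) := by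
          rw [← pow_succ']; congr 1; omega
        omega
      have := (Nat.clog_le_iff_le_pow (by norm_num)).mpr hle
      omega
  have hmK : m ≤ 2 ^ K := le_trans hmk (Nat.pow_le_pow_right (by norm_num) hK)
  have hc1 : 1 ≤ c := hc ▸ (Nat.one_le_div_iff (by omega)).mpr hmK
  have hcm2K : c * m ≤ 2 ^ K := by
    rw [hc]; exact Nat.div_mul_le_self _ _
  have hbmod : 2 ^ K - c * m = 2 ^ K % m := by
    have hdm : m * (2 ^ K / m) + 2 ^ K % m = 2 ^ K := Nat.div_add_mod (2 ^ K) m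
    have hcm : c * m = m * (2 ^ K / m) := by rw [hc]; ring
    omega
  have hai : ∀ i : Fin n, a i ≤ m := fun i =>
    hm ▸ Finset.single_le_sum (fun j _ => Nat.zero_le (a j)) (Finset.mem_univ i)
  -- rewrite all nu terms
  rw [nu_eq _ K (by omega), nu_eq _ k (by omega),
    Finset.sum_congr rfl fun i _ => nu_eq (c * a i) K
      (le_trans (Nat.mul_le_mul_left c (hai i)) hcm2K),
    Finset.sum_congr rfl fun i _ => nu_eq (a i) k (le_trans (hai i) hmk)]
  -- discrete main inequality
  have hmain : Tc K (2 ^ K - c * m) + ∑ i, Tc K (c * a i)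
      ≤ c * (Tc k (2 ^ k - m) + ∑ i, Tc k (a i)) := by
    rw [hbmod, hc]
    have := main_ineq a m k hm hm1 hmk hkm K hK
    calc Tc K (2 ^ K % m) + ∑ i, Tc K (2 ^ K / m * a i)
        ≤ 2 ^ K / m * (Tc k (2 ^ k - m) + ∑ i, Tc k (a i)) := this
      _ = _ := rfl
  set X := Tc K (2 ^ K - c * m) + ∑ i, Tc K (c * a i) with hX
  set S := Tc k (2 ^ k - m) + ∑ i, Tc k (a i) with hS
  have hXr : (Tc K (2 ^ K - c * m) : ℝ) / 2 ^ K + ∑ i, (Tc K (c * a i) : ℝ) / 2 ^ K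
      = (X : ℝ) / 2 ^ K := by
    rw [← Finset.sum_div, hX]; push_cast; ring
  have hSr : (Tc k (2 ^ k - m) : ℝ) / 2 ^ k + ∑ i, (Tc k (a i) : ℝ) / 2 ^ k
      = (S : ℝ) / 2 ^ k := by
    rw [← Finset.sum_div, hS]; push_cast; ring
  rw [hXr, hSr]
  have h2K : (0:ℝ) < 2 ^ K := by positivity
  have h2k : (0:ℝ) < 2 ^ k := by positivity
  have hmr : (0:ℝ) < m := by exact_mod_cast hm1
  have hcr : (0:ℝ) < c := by exact_mod_cast hc1
  have hL : (2 : ℝ) ^ K / ((c : ℝ) * m) * ((X : ℝ) / 2 ^ K) = (X : ℝ) / ((c : ℝ) * m) := by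
    field_simp
  have hR : (2 : ℝ) ^ k / (m : ℝ) * ((S : ℝ) / 2 ^ k) = (S : ℝ) / (m : ℝ) := by
    field_simp
  rw [hL, hR, div_le_div_iff₀ (by positivity) hmr]
  have hXS : (X : ℝ) ≤ (c : ℝ) * S := by exact_mod_cast hmain
  nlinarith [hXS, hmr, Nat.cast_nonneg (α := ℝ) S]
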